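/- arXiv:2006.04366 — 3 statements merged into one kernel-verified Lean document; each statement's English description precedes it below -/
import Mathlib

section
/- Let μ be the law of an N×D random matrix X whose entries are i.i.d. standard Gaussian N(0,1), and let α ≥ 0. Then the expected regularized log-determinant satisfies ∫ log det(α·I_D + X(ω)ᵀ·X(ω)) dμ(ω) ≤ D · log(N + α). -/
open Matrix Real MeasureTheory ProbabilityTheory

namespace Stmt2Aux

open Filter
open scoped ENNReal NNReal

lemma integrable_sq_mul_exp :
    Integrable fun x : ℝ => x ^ 2 * rexp (-2⁻¹ * x ^ 2) := by
  have h := integrable_rpow_mul_exp_neg_mul_sq (b := (2:ℝ)⁻¹) (by norm_num) (s := 2) (by norm_num)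
  simpa [Real.rpow_two] using h

lemma hasDerivAt_aux (x : ℝ) :
    HasDerivAt (fun y : ℝ => -(y * rexp (-2⁻¹ * y ^ 2)))
      (x ^ 2 * rexp (-2⁻¹ * x ^ 2) - rexp (-2⁻¹ * x ^ 2)) x := by
  have h1 : HasDerivAt (fun y : ℝ => -2⁻¹ * y ^ 2) (-2⁻¹ * (2 * x ^ 1)) x := by
    simpa using (hasDerivAt_pow 2 x).const_mul (-2⁻¹ : ℝ)
  have h3 : HasDerivAt (fun y : ℝ => -(y * rexp (-2⁻¹ * y ^ 2))) _ x :=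
    ((hasDerivAt_id x).mul h1.exp).neg
  convert h3 using 1
  simp only [id]
  ring

lemma integral_sq_mul_exp :
    ∫ x : ℝ, x ^ 2 * rexp (-2⁻¹ * x ^ 2) = Real.sqrt (2 * π) := by
  have hie : Integrable fun x : ℝ => rexp (-2⁻¹ * x ^ 2) := integrable_exp_neg_mul_sq (by norm_num)
  have h0 : ∫ x : ℝ, (x ^ 2 * rexp (-2⁻¹ * x ^ 2) - rexp (-2⁻¹ * x ^ 2)) = 0 :=
    integral_eq_zero_of_hasDerivAt_of_integrable hasDerivAt_aux
      (integrable_sq_mul_exp.sub hie) ((integrable_mul_exp_neg_mul_sq (by norm_num)).neg)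
  rw [integral_sub integrable_sq_mul_exp hie, sub_eq_zero] at h0
  rw [h0, integral_gaussian]
  rw [show π / 2⁻¹ = 2 * π by ring]

lemma gaussianPDFReal_eq (x : ℝ) :
    gaussianPDFReal 0 1 x = (Real.sqrt (2 * π))⁻¹ * rexp (-2⁻¹ * x ^ 2) := by
  simp only [gaussianPDFReal, NNReal.coe_one, mul_one, sub_zero]
  ring_nf

lemma integrable_sq_gaussianReal :
    Integrable (fun x : ℝ => x ^ 2) (gaussianReal 0 1) := by
  rw [gaussianReal_of_var_ne_zero 0 one_ne_zero, gaussianPDF_def]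
  have hmeas : Measurable fun x => Real.toNNReal (gaussianPDFReal 0 1 x) :=
    (measurable_gaussianPDFReal 0 1).real_toNNReal
  rw [show (fun x => ENNReal.ofReal (gaussianPDFReal 0 1 x))
      = (fun x => ((gaussianPDFReal 0 1 x).toNNReal : ℝ≥0∞)) from rfl]
  rw [integrable_withDensity_iff_integrable_smul hmeas]
  have hpt : ∀ x : ℝ, (Real.toNNReal (gaussianPDFReal 0 1 x)) • x ^ 2
      = (Real.sqrt (2*π))⁻¹ * (x ^ 2 * rexp (-2⁻¹ * x ^ 2)) := by
    intro x
    rw [NNReal.smul_def, Real.coe_toNNReal _ (gaussianPDFReal_nonneg 0 1 x), gaussianPDFReal_eq,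
      smul_eq_mul]
    ring
  exact (integrable_sq_mul_exp.const_mul ((Real.sqrt (2*π))⁻¹)).congr
    (Eventually.of_forall fun x => (hpt x).symm)

lemma integral_sq_gaussianReal : ∫ x, x ^ 2 ∂(gaussianReal 0 1) = 1 := by
  rw [gaussianReal_of_var_ne_zero 0 one_ne_zero, gaussianPDF_def]
  have hmeas : Measurable fun x => Real.toNNReal (gaussianPDFReal 0 1 x) :=
    (measurable_gaussianPDFReal 0 1).real_toNNReal
  rw [show (fun x => ENNReal.ofReal (gaussianPDFReal 0 1 x))
      = (fun x => ((gaussianPDFReal 0 1 x).toNNReal : ℝ≥0∞)) from rfl]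
  rw [integral_withDensity_eq_integral_smul hmeas]
  have : ∀ x : ℝ, (Real.toNNReal (gaussianPDFReal 0 1 x)) • x ^ 2
      = (Real.sqrt (2*π))⁻¹ * (x ^ 2 * rexp (-2⁻¹ * x ^ 2)) := by
    intro x
    rw [NNReal.smul_def, Real.coe_toNNReal _ (gaussianPDFReal_nonneg 0 1 x), gaussianPDFReal_eq,
      smul_eq_mul]
    ring
  rw [integral_congr_ae (Eventually.of_forall this), MeasureTheory.integral_const_mul, integral_sq_mul_exp,
    inv_mul_cancel₀]
  positivity

lemma pi_map_eval {ι : Type*} [Fintype ι] [DecidableEq ι] {β : ι → Type*}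
    [∀ i, MeasurableSpace (β i)] (m : ∀ i, Measure (β i)) [∀ i, IsProbabilityMeasure (m i)]
    (j : ι) : (Measure.pi m).map (Function.eval j) = m j := by
  ext s hs
  rw [Measure.map_apply (measurable_pi_apply j) hs, Set.eval_preimage, Measure.pi_pi]
  rw [Finset.prod_eq_single j (fun i _ hij => by simp [Function.update_of_ne hij])
    (fun h => absurd (Finset.mem_univ j) h)]
  simp

lemma pi_map_comp {β : Type*} [MeasurableSpace β] {a b : ℕ}
    (m : Measure β) [IsProbabilityMeasure m] (g : Fin a → Fin b) (hg : Function.Injective g) :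
    (Measure.pi fun _ : Fin b => m).map (fun x (i : Fin a) => x (g i))
      = Measure.pi fun _ : Fin a => m := by
  classical
  refine (Measure.pi_eq fun s hs => ?_).symm
  have hmeas : Measurable fun (x : Fin b → β) (i : Fin a) => x (g i) :=
    measurable_pi_lambda _ fun i => measurable_pi_apply _
  rw [Measure.map_apply hmeas (MeasurableSet.univ_pi hs)]
  have hpre : (fun (x : Fin b → β) (i : Fin a) => x (g i)) ⁻¹' (Set.univ.pi s)
      = Set.univ.pi (fun k => if h : ∃ i, g i = k then s h.choose else Set.univ) := by
    ext x
    simp only [Set.mem_preimage, Set.mem_univ_pi]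
    constructor
    · intro h k
      by_cases hk : ∃ i, g i = k
      · rw [dif_pos hk]
        have := h hk.choose
        rwa [hk.choose_spec] at this
      · simp [hk]
    · intro h i
      have hex : ∃ i', g i' = g i := ⟨i, rfl⟩
      have := h (g i)
      rw [dif_pos hex] at this
      have heq : hex.choose = i := hg hex.choose_spec
      rwa [heq] at this
  rw [hpre, Measure.pi_pi]
  calc ∏ k, m (if h : ∃ i, g i = k then s h.choose else Set.univ)
      = ∏ k ∈ Finset.univ.image g, m (if h : ∃ i, g i = k then s h.choose else Set.univ) := by
        refine (Finset.prod_subset (Finset.subset_univ _) ?_).symm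
        intro k _ hk
        have : ¬ ∃ i, g i = k := by simpa [Finset.mem_image] using hk
        simp [this]
    _ = ∏ i, m (if h : ∃ i', g i' = g i then s h.choose else Set.univ) :=
        Finset.prod_image (fun i _ j _ h => hg h)
    _ = ∏ i, m (s i) := by
        refine Finset.prod_congr rfl fun i _ => ?_
        have hex : ∃ i', g i' = g i := ⟨i, rfl⟩
        rw [dif_pos hex, hg hex.choose_spec]

lemma pi_map_pi {β γ : Type*} [MeasurableSpace β] [MeasurableSpace γ] {k : ℕ}
    (m₁ : Measure β) (m₂ : Measure γ) [IsProbabilityMeasure m₁] [IsProbabilityMeasure m₂]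
    (f : β → γ) (hf : Measurable f) (hmap : m₁.map f = m₂) :
    (Measure.pi fun _ : Fin k => m₁).map (fun x => f ∘ x) = Measure.pi fun _ : Fin k => m₂ := by
  refine (Measure.pi_eq fun s hs => ?_).symm
  have hmeas : Measurable fun (x : Fin k → β) => f ∘ x :=
    measurable_pi_lambda _ fun i => hf.comp (measurable_pi_apply i)
  rw [Measure.map_apply hmeas (MeasurableSet.univ_pi hs)]
  have : (fun x : Fin k → β => f ∘ x) ⁻¹' Set.univ.pi s = Set.univ.pi fun i => f ⁻¹' (s i) := by
    ext x; simp [Function.comp]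
  rw [this, Measure.pi_pi]
  exact Finset.prod_congr rfl fun i _ => by rw [← hmap, Measure.map_apply hf (hs i)]

lemma prod_null_of_slices {β γ : Type*} [MeasurableSpace β] [MeasurableSpace γ]
    (μ : Measure β) (ν : Measure γ) [SigmaFinite μ] [SigmaFinite ν]
    {s : Set (β × γ)} (hs : MeasurableSet s)
    (h : ∀ᵐ y ∂ν, μ {x | (x, y) ∈ s} = 0) : μ.prod ν s = 0 := by
  rw [← Measure.prod_swap, Measure.map_apply measurable_swap hs,
    Measure.measure_prod_null (measurable_swap hs)]
  filter_upwards [h] with y hy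
  exact hy

lemma gaussianReal_singleton (x : ℝ) : gaussianReal 0 1 {x} = 0 :=
  gaussianReal_absolutelyContinuous 0 one_ne_zero (Real.volume_singleton)

lemma hyperplane_null (n : ℕ) (c : Fin (n+1) → ℝ) (hc : c 0 ≠ 0) :
    (Measure.pi fun _ : Fin (n+1) => gaussianReal 0 1) {r | ∑ j, r j * c j = 0} = 0 := by
  have hmp := measurePreserving_piFinSuccAbove (fun _ : Fin (n+1) => gaussianReal 0 1) 0
  set e := MeasurableEquiv.piFinSuccAbove (fun _ : Fin (n+1) => ℝ) 0 with he
  set A := {r : Fin (n+1) → ℝ | ∑ j, r j * c j = 0} with hA_def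
  have hA : MeasurableSet A := by
    have : Continuous fun r : Fin (n+1) → ℝ => ∑ j, r j * c j :=
      continuous_finset_sum _ fun j _ => (continuous_apply j).mul continuous_const
    exact this.measurable (measurableSet_singleton 0)
  have h1 : ((gaussianReal 0 1).prod (Measure.pi fun _ : Fin n => gaussianReal 0 1))
      (e.symm ⁻¹' A) = (Measure.pi fun _ : Fin (n+1) => gaussianReal 0 1) A :=
    (hmp.symm e).measure_preimage hA.nullMeasurableSet
  rw [← h1]
  refine prod_null_of_slices _ _ (e.symm.measurable hA) (Eventually.of_forall fun y => ?_)
  have hset : {t : ℝ | (t, y) ∈ e.symm ⁻¹' A}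
      = {t : ℝ | t * c 0 + ∑ i : Fin n, y i * c ((0 : Fin (n+1)).succAbove i) = 0} := by
    ext t
    simp only [Set.mem_preimage, Set.mem_setOf_eq, hA_def, he,
      MeasurableEquiv.piFinSuccAbove_symm_apply, Fin.insertNthEquiv_apply]
    rw [Fin.sum_univ_succAbove (fun j => (Fin.insertNth (α := fun _ => ℝ) 0 t y) j * c j) 0]
    simp [Fin.insertNth_apply_same, Fin.insertNth_apply_succAbove]
  rw [hset]
  have : {t : ℝ | t * c 0 + ∑ i : Fin n, y i * c ((0 : Fin (n+1)).succAbove i) = 0}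
      = {-(∑ i : Fin n, y i * c ((0 : Fin (n+1)).succAbove i)) / c 0} := by
    ext t
    simp only [Set.mem_setOf_eq, Set.mem_singleton_iff]
    rw [eq_div_iff hc]
    constructor <;> intro h <;> linarith
  rw [this]
  exact gaussianReal_singleton _

lemma continuous_det_of (m : ℕ) :
    Continuous fun Y : Fin m → Fin m → ℝ => (Matrix.of Y).det :=
  Continuous.matrix_det <| continuous_matrix fun i j => (continuous_apply j).comp (continuous_apply i)

lemma det_zero_null : ∀ n : ℕ,
    (Measure.pi fun _ : Fin n => Measure.pi fun _ : Fin n => gaussianReal 0 1)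
      {Y : Fin n → Fin n → ℝ | (Matrix.of Y).det = 0} = 0 := by
  intro n
  induction n with
  | zero =>
    have : {Y : Fin 0 → Fin 0 → ℝ | (Matrix.of Y).det = 0} = ∅ := by
      ext Y
      simp [Matrix.det_isEmpty]
    simp [this]
  | succ n ih =>
    set ν : Measure (Fin (n+1) → ℝ) := Measure.pi fun _ => gaussianReal 0 1 with hν
    set ρ : Measure (Fin n → Fin (n+1) → ℝ) := Measure.pi fun _ => ν with hρ
    set S : Set (Fin (n+1) → Fin (n+1) → ℝ) := {Y | (Matrix.of Y).det = 0} with hS_def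
    have hS : MeasurableSet S :=
      (continuous_det_of (n+1)).measurable (measurableSet_singleton 0)
    have hmp := measurePreserving_piFinSuccAbove (fun _ : Fin (n+1) => ν) 0
    set e := MeasurableEquiv.piFinSuccAbove (fun _ : Fin (n+1) => (Fin (n+1) → ℝ)) 0 with he
    have h1 : (ν.prod ρ) (e.symm ⁻¹' S)
        = (Measure.pi fun _ : Fin (n+1) => ν) S :=
      (hmp.symm e).measure_preimage hS.nullMeasurableSet
    rw [show (Measure.pi fun _ : Fin (n+1) => Measure.pi fun _ : Fin (n+1) => gaussianReal 0 1)
      = Measure.pi fun _ : Fin (n+1) => ν from rfl, ← h1]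
    -- a.e. rest-of-rows have nonzero minor
    have hminor : ∀ᵐ R ∂ρ, (Matrix.of fun a b => R a (Fin.succ b)).det ≠ 0 := by
      have hmap1 : ν.map (fun r (i : Fin n) => r (Fin.succ i))
          = Measure.pi fun _ : Fin n => gaussianReal 0 1 :=
        pi_map_comp _ Fin.succ (Fin.succ_injective n)
      have hmap2 : ρ.map (fun R => (fun r (i : Fin n) => r (Fin.succ i)) ∘ R)
          = Measure.pi fun _ : Fin n => Measure.pi fun _ : Fin n => gaussianReal 0 1 :=
        pi_map_pi ν _ _ (measurable_pi_lambda _ fun i => measurable_pi_apply _) hmap1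
      have hmeas2 : Measurable fun (R : Fin n → Fin (n+1) → ℝ) =>
          (fun r (i : Fin n) => r (Fin.succ i)) ∘ R :=
        measurable_pi_lambda _ fun a =>
          (measurable_pi_lambda _ fun i => measurable_pi_apply _).comp (measurable_pi_apply a)
      have hnull : ρ {R : Fin n → Fin (n+1) → ℝ |
          (Matrix.of fun a b => R a (Fin.succ b)).det = 0} = 0 := by
        have hSn : MeasurableSet {Y : Fin n → Fin n → ℝ | (Matrix.of Y).det = 0} :=
          (continuous_det_of n).measurable (measurableSet_singleton 0)
        have hmm := Measure.map_apply (μ := ρ) hmeas2 hSn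
        rw [hmap2] at hmm
        rw [show {R : Fin n → Fin (n+1) → ℝ | (Matrix.of fun a b => R a (Fin.succ b)).det = 0}
            = (fun R => (fun r (i : Fin n) => r (Fin.succ i)) ∘ R) ⁻¹'
              {Y : Fin n → Fin n → ℝ | (Matrix.of Y).det = 0} from rfl, ← hmm]
        exact ih
      rw [ae_iff]
      simpa using hnull
    refine prod_null_of_slices _ _ (e.symm.measurable hS) ?_
    filter_upwards [hminor] with R hR
    have hrow : ∀ (r : Fin (n+1) → ℝ) (a : Fin n),
        (Fin.insertNth (α := fun _ => (Fin (n+1) → ℝ)) 0 r R) a.succ = R a := by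
      intro r a
      rw [show (Fin.succ a) = Fin.succAbove 0 a from (congrFun Fin.succAbove_zero a).symm,
        Fin.insertNth_apply_succAbove]
    have hset : {t : Fin (n+1) → ℝ | (t, R) ∈ e.symm ⁻¹' S}
        = {r : Fin (n+1) → ℝ | ∑ j, r j *
            ((-1) ^ (j : ℕ) * (Matrix.of fun a b => R a (j.succAbove b)).det) = 0} := by
      ext r
      show (Matrix.of (Fin.insertNth (α := fun _ => (Fin (n+1) → ℝ)) 0 r R)).det = 0 ↔ _
      rw [Matrix.det_succ_row_zero]
      have hterm : ∀ j : Fin (n+1),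
          (-1) ^ (j:ℕ) * (Matrix.of (Fin.insertNth (α := fun _ => (Fin (n+1) → ℝ)) 0 r R)) 0 j *
            ((Matrix.of (Fin.insertNth (α := fun _ => (Fin (n+1) → ℝ)) 0 r R)).submatrix
              Fin.succ j.succAbove).det
          = r j * ((-1) ^ (j : ℕ) * (Matrix.of fun a b => R a (j.succAbove b)).det) := by
        intro j
        have hsub : (Matrix.of (Fin.insertNth (α := fun _ => (Fin (n+1) → ℝ)) 0 r R)).submatrix
            Fin.succ j.succAbove = Matrix.of fun a b => R a (j.succAbove b) := by
          ext a b
          simp [Matrix.submatrix_apply, hrow]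
        rw [hsub]
        simp only [Matrix.of_apply, Fin.insertNth_apply_same]
        ring
      rw [Finset.sum_congr rfl fun j _ => hterm j]
      exact Iff.rfl
    rw [hset]
    refine hyperplane_null n _ ?_
    have h0 : Fin.succAbove (0 : Fin (n+1)) = Fin.succ := Fin.succAbove_zero
    simpa [h0] using hR

lemma log_det_le {D : ℕ} (M : Matrix (Fin D) (Fin D) ℝ) (hM : M.PosSemidef) (hdet : M.det ≠ 0)
    {c : ℝ} (hc : 0 < c) :
    Real.log M.det ≤ M.trace / c + D * (Real.log c - 1) := by
  classical
  have hherm := hM.isHermitian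
  have hdet_eq : M.det = ∏ i, hherm.eigenvalues i := hherm.det_eq_prod_eigenvalues
  have heig_pos : ∀ i, 0 < hherm.eigenvalues i := by
    intro i
    rcases (hM.eigenvalues_nonneg i).lt_or_eq with h | h
    · exact h
    · exact absurd (hdet_eq.trans (Finset.prod_eq_zero (Finset.mem_univ i) h.symm)) hdet
  have hU : (star (hherm.eigenvectorUnitary : Matrix (Fin D) (Fin D) ℝ))
      * (hherm.eigenvectorUnitary : Matrix (Fin D) (Fin D) ℝ) = 1 :=
    (Matrix.mem_unitaryGroup_iff').mp hherm.eigenvectorUnitary.2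
  have htrace : M.trace = ∑ i, hherm.eigenvalues i := by
    nth_rewrite 1 [hherm.spectral_theorem]
    rw [Unitary.conjStarAlgAut_apply, Matrix.trace_mul_cycle, hU, one_mul, Matrix.trace_diagonal]
    simp [Function.comp]
  have hterm : ∀ i, Real.log (hherm.eigenvalues i)
      ≤ hherm.eigenvalues i / c + (Real.log c - 1) := by
    intro i
    have h1 : Real.log (hherm.eigenvalues i / c) ≤ hherm.eigenvalues i / c - 1 :=
      Real.log_le_sub_one_of_pos (div_pos (heig_pos i) hc)
    rw [Real.log_div (heig_pos i).ne' hc.ne'] at h1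
    linarith
  calc Real.log M.det = ∑ i, Real.log (hherm.eigenvalues i) := by
        rw [hdet_eq, Real.log_prod (fun i _ => (heig_pos i).ne')]
    _ ≤ ∑ i, (hherm.eigenvalues i / c + (Real.log c - 1)) :=
        Finset.sum_le_sum fun i _ => hterm i
    _ = M.trace / c + D * (Real.log c - 1) := by
        rw [Finset.sum_add_distrib, ← Finset.sum_div, ← htrace, Finset.sum_const,
          Finset.card_univ, Fintype.card_fin, nsmul_eq_mul]

end Stmt2Aux

open Stmt2Aux Filter

/-- Expected regularized log-determinant bound: if the entries of the `N × D`
random matrix `X` are i.i.d. standard Gaussians, then for `α ≥ 0`,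
`E[log det (α I_D + Xᵀ X)] ≤ D · log (N + α)`. -/
theorem stmt_2 (N D : ℕ) (α : ℝ) (hα : 0 ≤ α) :
    ∫ X : Fin N → Fin D → ℝ,
        Real.log ((α • (1 : Matrix (Fin D) (Fin D) ℝ) + (Matrix.of X)ᵀ * Matrix.of X).det)
        ∂(Measure.pi fun _ : Fin N => Measure.pi fun _ : Fin D => gaussianReal 0 1)
      ≤ (D : ℝ) * Real.log (N + α) := by
  classical
  rcases Nat.eq_zero_or_pos D with hD | hD
  · subst hD
    simp [Matrix.det_isEmpty]
  rcases Nat.eq_zero_or_pos N with hN | hN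
  · subst hN
    have hzero : ∀ X : Fin 0 → Fin D → ℝ, (Matrix.of X)ᵀ * Matrix.of X = 0 := by
      intro X; ext i j
      simp [Matrix.mul_apply]
    have heq : (fun X : Fin 0 → Fin D → ℝ =>
        Real.log ((α • (1 : Matrix (Fin D) (Fin D) ℝ) + (Matrix.of X)ᵀ * Matrix.of X).det))
        = fun _ => (D : ℝ) * Real.log α := by
      funext X
      rw [hzero X, add_zero, Matrix.det_smul, Matrix.det_one, mul_one, Fintype.card_fin,
        Real.log_pow]
    rw [heq, integral_const]
    simp [measure_univ]
  set μ : Measure (Fin N → Fin D → ℝ) :=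
    Measure.pi fun _ : Fin N => Measure.pi fun _ : Fin D => gaussianReal 0 1 with hμ
  by_cases hspecial : α = 0 ∧ N < D
  · obtain ⟨hα0, hND⟩ := hspecial
    subst hα0
    have hdet0 : ∀ X : Fin N → Fin D → ℝ, ((Matrix.of X)ᵀ * Matrix.of X).det = 0 := by
      intro X
      by_contra h
      have hunit : IsUnit ((Matrix.of X)ᵀ * Matrix.of X) :=
        (Matrix.isUnit_iff_isUnit_det _).mpr (isUnit_iff_ne_zero.mpr h)
      have hrank := Matrix.rank_of_isUnit _ hunit
      rw [Fintype.card_fin] at hrank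
      have h2 := Matrix.rank_le_card_height (Matrix.of X)
      rw [Fintype.card_fin] at h2
      rw [Matrix.rank_transpose_mul_self] at hrank
      omega
    have heq : (fun X : Fin N → Fin D → ℝ =>
        Real.log (((0:ℝ) • (1 : Matrix (Fin D) (Fin D) ℝ) + (Matrix.of X)ᵀ * Matrix.of X).det))
        = fun _ => (0:ℝ) := by
      funext X
      rw [zero_smul, zero_add, hdet0, Real.log_zero]
    rw [heq, integral_zero]
    have h1N : (1:ℝ) ≤ (N:ℝ) + 0 := by
      rw [add_zero]; exact_mod_cast hN
    exact mul_nonneg (Nat.cast_nonneg D) (Real.log_nonneg h1N)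
  -- main case
  set c : ℝ := (N : ℝ) + α with hc_def
  have hNR : (1:ℝ) ≤ (N:ℝ) := by exact_mod_cast hN
  have hc1 : 1 ≤ c := by rw [hc_def]; linarith
  have hc : 0 < c := lt_of_lt_of_le one_pos hc1
  have hPSD2 : ∀ X : Fin N → Fin D → ℝ, ((Matrix.of X)ᵀ * Matrix.of X).PosSemidef := by
    intro X
    have h := Matrix.posSemidef_conjTranspose_mul_self (Matrix.of X)
    rwa [Matrix.conjTranspose_eq_transpose_of_trivial] at h
  have hPSD : ∀ X : Fin N → Fin D → ℝ,
      (α • (1 : Matrix (Fin D) (Fin D) ℝ) + (Matrix.of X)ᵀ * Matrix.of X).PosSemidef := by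
    intro X
    refine Matrix.PosSemidef.add ?_ (hPSD2 X)
    rw [Matrix.smul_one_eq_diagonal]
    exact Matrix.PosSemidef.diagonal fun i => hα
  -- marginals
  have hmeas_ev : ∀ (k : Fin N) (i : Fin D), Measurable fun X : Fin N → Fin D → ℝ => X k i :=
    fun k i => (measurable_pi_apply i).comp (measurable_pi_apply k)
  have hmap_sq : ∀ (k : Fin N) (i : Fin D), μ.map (fun X => X k i) = gaussianReal 0 1 := by
    intro k i
    have h1 : μ.map (Function.eval k) = Measure.pi fun _ : Fin D => gaussianReal 0 1 :=
      pi_map_eval _ k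
    have h2 : (Measure.pi fun _ : Fin D => gaussianReal 0 1).map (Function.eval i)
        = gaussianReal 0 1 := pi_map_eval _ i
    rw [← h2, ← h1, Measure.map_map (measurable_pi_apply i) (measurable_pi_apply k)]
    rfl
  have hsq_int : ∀ (k : Fin N) (i : Fin D),
      Integrable (fun X : Fin N → Fin D → ℝ => (X k i)^2) μ := by
    intro k i
    have hg : Integrable (fun x : ℝ => x ^ 2) (μ.map (fun X => X k i)) := by
      rw [hmap_sq k i]; exact integrable_sq_gaussianReal
    exact (integrable_map_measure ((measurable_id.pow_const 2).aestronglyMeasurable)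
      (hmeas_ev k i).aemeasurable).mp hg
  have hsq_val : ∀ (k : Fin N) (i : Fin D), ∫ X, (X k i)^2 ∂μ = 1 := by
    intro k i
    calc ∫ X, (X k i)^2 ∂μ = ∫ x, x^2 ∂(μ.map (fun X => X k i)) :=
          (integral_map (hmeas_ev k i).aemeasurable
            ((measurable_id.pow_const 2).aestronglyMeasurable)).symm
      _ = 1 := by rw [hmap_sq k i]; exact integral_sq_gaussianReal
  set g : (Fin N → Fin D → ℝ) → ℝ := fun X =>
    (α * D + ∑ i : Fin D, ∑ k : Fin N, (X k i)^2) / c + D * (Real.log c - 1) with hg_def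
  have hSint : Integrable (fun X : Fin N → Fin D → ℝ =>
      ∑ i : Fin D, ∑ k : Fin N, (X k i)^2) μ :=
    integrable_finset_sum _ fun i _ => integrable_finset_sum _ fun k _ => hsq_int k i
  have hgInt : Integrable g μ := by
    have h1 : Integrable (fun X : Fin N → Fin D → ℝ =>
        (α * D + ∑ i : Fin D, ∑ k : Fin N, (X k i)^2) / c) μ :=
      ((integrable_const (α * D)).add hSint).div_const c
    exact h1.add (integrable_const _)
  have hinner : ∀ i : Fin D, (∫ X, ∑ k : Fin N, (X k i)^2 ∂μ) = (N:ℝ) := by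
    intro i
    rw [integral_finset_sum _ fun k _ => hsq_int k i]
    simp [hsq_val]
  have hsum_val : ∫ X, (∑ i : Fin D, ∑ k : Fin N, (X k i)^2) ∂μ = (D:ℝ) * (N:ℝ) := by
    rw [integral_finset_sum _ (fun i _ => integrable_finset_sum _ fun k _ => hsq_int k i),
      Finset.sum_congr rfl fun i _ => hinner i]
    simp [Finset.sum_const, Finset.card_univ, mul_comm]
  have hbig : ∫ X, (α * D + ∑ i : Fin D, ∑ k : Fin N, (X k i)^2) ∂μ
      = α * D + (D:ℝ) * (N:ℝ) := by
    rw [integral_add (integrable_const _) hSint, integral_const, hsum_val]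
    simp [measure_univ]
  have hgVal : ∫ X, g X ∂μ = D * Real.log c := by
    rw [hg_def]
    simp only []
    have h1 : Integrable (fun X : Fin N → Fin D → ℝ =>
        (α * D + ∑ i : Fin D, ∑ k : Fin N, (X k i)^2) / c) μ :=
      ((integrable_const (α * D)).add hSint).div_const c
    rw [integral_add h1 (integrable_const _), integral_div, hbig, integral_const]
    simp only [measure_univ, ENNReal.toReal_one, probReal_univ, one_smul]
    have hDc : α * (D:ℝ) + (D:ℝ) * (N:ℝ) = (D:ℝ) * c := by
      rw [hc_def]; ring
    rw [hDc, mul_div_assoc, div_self hc.ne', mul_one]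
    ring
  -- a.e. nonvanishing determinant
  have hae : ∀ᵐ X ∂μ,
      (α • (1 : Matrix (Fin D) (Fin D) ℝ) + (Matrix.of X)ᵀ * Matrix.of X).det ≠ 0 := by
    rcases hα.lt_or_eq with hα' | hα'
    · refine Eventually.of_forall fun X => ?_
      have h1 : (α • (1 : Matrix (Fin D) (Fin D) ℝ)).PosDef := by
        rw [Matrix.smul_one_eq_diagonal]
        exact Matrix.PosDef.diagonal fun i => hα'
      exact (h1.add_posSemidef (hPSD2 X)).det_pos.ne'
    · have hDN : D ≤ N := by
        by_contra hcon
        exact hspecial ⟨hα'.symm, by omega⟩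
      have key : μ {X : Fin N → Fin D → ℝ | ((Matrix.of X)ᵀ * Matrix.of X).det = 0} = 0 := by
        have hmeasG : Measurable fun (X : Fin N → Fin D → ℝ) (i : Fin D) =>
            X (Fin.castLE hDN i) :=
          measurable_pi_lambda _ fun i => measurable_pi_apply _
        have hmapG : μ.map (fun X (i : Fin D) => X (Fin.castLE hDN i))
            = Measure.pi fun _ : Fin D => Measure.pi fun _ : Fin D => gaussianReal 0 1 :=
          pi_map_comp _ (Fin.castLE hDN) (Fin.castLE_injective hDN)
        have hSm : MeasurableSet {Y : Fin D → Fin D → ℝ | (Matrix.of Y).det = 0} :=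
          (continuous_det_of D).measurable (measurableSet_singleton 0)
        have hsub : {X : Fin N → Fin D → ℝ | ((Matrix.of X)ᵀ * Matrix.of X).det = 0}
            ⊆ (fun X (i : Fin D) => X (Fin.castLE hDN i)) ⁻¹' {Y | (Matrix.of Y).det = 0} := by
          intro X hX
          obtain ⟨v, hv0, hMv⟩ := (Matrix.exists_mulVec_eq_zero_iff).mpr hX
          have hXv : Matrix.of X *ᵥ v = 0 := by
            have h3 : v ⬝ᵥ (((Matrix.of X)ᵀ * Matrix.of X) *ᵥ v) = 0 := by
              rw [hMv, dotProduct_zero]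
            rw [← Matrix.mulVec_mulVec, Matrix.dotProduct_mulVec,
              Matrix.vecMul_transpose] at h3
            exact dotProduct_self_eq_zero.mp h3
          refine Matrix.exists_mulVec_eq_zero_iff.mp ⟨v, hv0, ?_⟩
          ext i
          have hcf := congrFun hXv (Fin.castLE hDN i)
          simpa [Matrix.mulVec, dotProduct] using hcf
        refine measure_mono_null hsub ?_
        rw [← Measure.map_apply hmeasG hSm, hmapG]
        exact det_zero_null D
      rw [ae_iff]
      have hseteq : {X : Fin N → Fin D → ℝ |
          ¬ (α • (1 : Matrix (Fin D) (Fin D) ℝ) + (Matrix.of X)ᵀ * Matrix.of X).det ≠ 0}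
          = {X : Fin N → Fin D → ℝ | ((Matrix.of X)ᵀ * Matrix.of X).det = 0} := by
        ext X
        rw [← hα']
        simp [not_not]
      rw [hseteq]
      exact key
  have hle : (fun X : Fin N → Fin D → ℝ =>
      Real.log ((α • (1 : Matrix (Fin D) (Fin D) ℝ) + (Matrix.of X)ᵀ * Matrix.of X).det))
      ≤ᵐ[μ] g := by
    filter_upwards [hae] with X hdet
    have h := log_det_le _ (hPSD X) hdet hc
    have htr : (α • (1 : Matrix (Fin D) (Fin D) ℝ) + (Matrix.of X)ᵀ * Matrix.of X).trace
        = α * D + ∑ i : Fin D, ∑ k : Fin N, (X k i)^2 := by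
      rw [Matrix.trace_add, Matrix.trace_smul, Matrix.trace_one]
      congr 1
      · simp [smul_eq_mul]
      · simp [Matrix.trace, Matrix.diag, Matrix.mul_apply, sq]
    rw [htr] at h
    exact h
  by_cases hf : Integrable (fun X : Fin N → Fin D → ℝ =>
      Real.log ((α • (1 : Matrix (Fin D) (Fin D) ℝ) + (Matrix.of X)ᵀ * Matrix.of X).det)) μ
  · calc ∫ X, Real.log ((α • (1 : Matrix (Fin D) (Fin D) ℝ)
          + (Matrix.of X)ᵀ * Matrix.of X).det) ∂μ
        ≤ ∫ X, g X ∂μ := integral_mono_ae hf hgInt hle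
      _ = D * Real.log c := hgVal
  · rw [integral_undef hf]
    exact mul_nonneg (Nat.cast_nonneg D) (Real.log_nonneg hc1)
end

section
/- Let μ be the law of an N×D random matrix X whose entries are i.i.d. standard Gaussian N(0,1), and let c ≥ 0. Then ∫ log det(I_D + c·X(ω)ᵀ·X(ω)) dμ(ω) ≤ D · log(1 + c·N). In particular, for signal-to-noise ratio s ≥ 0 and c = s/D, the channel capacity C = (1/2)∫ log det(I_D + (s/D)·XᵀX) dμ satisfies C ≤ (D/2)·log((N/D)·s + 1). -/
open Matrix Real MeasureTheory ProbabilityTheory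

section aux

/-- Evaluation at a coordinate is measure preserving for a product of probability measures. -/
lemma measurePreserving_eval_pi' {ι : Type*} [Fintype ι] [DecidableEq ι] {α : ι → Type*}
    [∀ i, MeasurableSpace (α i)] (ν : ∀ i, Measure (α i)) [∀ i, IsProbabilityMeasure (ν i)]
    (i : ι) : MeasurePreserving (Function.eval i) (Measure.pi ν) (ν i) := by
  refine ⟨measurable_pi_apply i, ?_⟩
  ext s hs
  rw [Measure.map_apply (measurable_pi_apply i) hs, Set.eval_preimage, Measure.pi_pi]
  rw [Finset.prod_eq_single i]
  · simp
  · intro j _ hj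
    simp [Function.update_of_ne hj]
  · simp

lemma integrable_sq_exp : Integrable (fun x : ℝ => x ^ 2 * Real.exp (-(1/2) * x ^ 2)) := by
  have := integrable_rpow_mul_exp_neg_mul_sq (b := (1/2 : ℝ)) (by norm_num)
    (s := 2) (by norm_num)
  simpa [Real.rpow_two] using this

lemma integral_sq_mul_exp : ∫ x : ℝ, x ^ 2 * Real.exp (-(1/2) * x ^ 2) = Real.sqrt (2 * π) := by
  have hu : ∀ x : ℝ, HasDerivAt (fun y : ℝ => y) 1 x := fun x => hasDerivAt_id x
  have hv : ∀ x : ℝ, HasDerivAt (fun y : ℝ => -Real.exp (-(1/2) * y ^ 2))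
      (x * Real.exp (-(1/2) * x ^ 2)) x := by
    intro x
    have h1 : HasDerivAt (fun y : ℝ => -(1/2) * y ^ 2) (-(1/2) * (2 * x ^ 1)) x :=
      (hasDerivAt_pow 2 x).const_mul _
    have h2 : HasDerivAt (fun y : ℝ => -Real.exp (-(1/2) * y ^ 2)) _ x := (h1.exp).neg
    convert h2 using 1
    ring
  have huv' : Integrable ((fun y : ℝ => y) * fun x => x * Real.exp (-(1/2) * x ^ 2)) := by
    have h := integrable_sq_exp
    rw [show ((fun y : ℝ => y) * fun x => x * Real.exp (-(1/2) * x ^ 2))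
        = fun x : ℝ => x ^ 2 * Real.exp (-(1/2) * x ^ 2) by funext x; simp [Pi.mul_apply]; ring]
    exact h
  have hu'v : Integrable ((fun _ : ℝ => (1:ℝ)) * fun y : ℝ => -Real.exp (-(1/2) * y ^ 2)) := by
    have h : Integrable (fun x : ℝ => Real.exp (-(1/2) * x ^ 2)) :=
      integrable_exp_neg_mul_sq (by norm_num)
    rw [show ((fun _ : ℝ => (1:ℝ)) * fun y : ℝ => -Real.exp (-(1/2) * y ^ 2))
        = fun x : ℝ => -Real.exp (-(1/2) * x ^ 2) by funext x; simp]
    exact h.neg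
  have huv : Integrable ((fun y : ℝ => y) * fun y : ℝ => -Real.exp (-(1/2) * y ^ 2)) := by
    have h : Integrable (fun x : ℝ => x * Real.exp (-(1/2) * x ^ 2)) :=
      integrable_mul_exp_neg_mul_sq (by norm_num)
    rw [show ((fun y : ℝ => y) * fun y : ℝ => -Real.exp (-(1/2) * y ^ 2))
        = fun x : ℝ => -(x * Real.exp (-(1/2) * x ^ 2)) by funext x; simp]
    exact h.neg
  have h := integral_mul_deriv_eq_deriv_mul_of_integrable (fun x _ => hu x) (fun x _ => hv x) huv' hu'v huv
  have h2 : ∫ x : ℝ, x * (x * Real.exp (-(1/2) * x ^ 2))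
      = - ∫ x : ℝ, 1 * (-Real.exp (-(1/2) * x ^ 2)) := h
  have h3 : ∫ x : ℝ, x ^ 2 * Real.exp (-(1/2) * x ^ 2)
      = ∫ x : ℝ, Real.exp (-(1/2) * x ^ 2) := by
    rw [show (fun x : ℝ => x ^ 2 * Real.exp (-(1/2) * x ^ 2))
        = fun x : ℝ => x * (x * Real.exp (-(1/2) * x ^ 2)) by funext x; ring, h2,
      ← integral_neg]
    congr 1; funext x; ring
  rw [h3, integral_gaussian]
  rw [show π / (1/2 : ℝ) = 2 * π by ring]

lemma integrable_sq_gaussian : Integrable (fun x : ℝ => x ^ 2) (gaussianReal 0 1) := by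
  rw [gaussianReal_of_var_ne_zero 0 one_ne_zero]
  have hmeas : Measurable fun x : ℝ => (gaussianPDFReal 0 1 x).toNNReal :=
    (measurable_gaussianPDFReal 0 1).real_toNNReal
  have heq : gaussianPDF 0 1 = fun x => ((gaussianPDFReal 0 1 x).toNNReal : ENNReal) := by
    funext x; rfl
  rw [heq, integrable_withDensity_iff_integrable_smul hmeas]
  have hpt : ∀ x : ℝ, (gaussianPDFReal 0 1 x).toNNReal • x ^ 2
      = (Real.sqrt (2 * π))⁻¹ * (x ^ 2 * Real.exp (-(1/2) * x ^ 2)) := by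
    intro x
    rw [NNReal.smul_def, Real.coe_toNNReal _ (gaussianPDFReal_nonneg 0 1 x), smul_eq_mul]
    simp only [gaussianPDFReal]
    push_cast
    ring_nf
  have h2 := integrable_sq_exp.const_mul ((Real.sqrt (2 * π))⁻¹)
  exact h2.congr (Filter.Eventually.of_forall fun x => (hpt x).symm)

lemma integral_sq_gaussian : ∫ x : ℝ, x ^ 2 ∂(gaussianReal 0 1) = 1 := by
  rw [gaussianReal_of_var_ne_zero 0 one_ne_zero]
  have hmeas : Measurable fun x : ℝ => (gaussianPDFReal 0 1 x).toNNReal :=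
    (measurable_gaussianPDFReal 0 1).real_toNNReal
  have heq : gaussianPDF 0 1 = fun x => ((gaussianPDFReal 0 1 x).toNNReal : ENNReal) := by
    funext x; rfl
  rw [heq, integral_withDensity_eq_integral_smul hmeas]
  have h1 : ∀ x : ℝ, (gaussianPDFReal 0 1 x).toNNReal • x ^ 2
      = (Real.sqrt (2 * π))⁻¹ * (x ^ 2 * Real.exp (-(1/2) * x ^ 2)) := by
    intro x
    rw [NNReal.smul_def, Real.coe_toNNReal _ (gaussianPDFReal_nonneg 0 1 x), smul_eq_mul]
    simp only [gaussianPDFReal]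
    push_cast
    ring_nf
  simp_rw [h1]
  rw [integral_const_mul, integral_sq_mul_exp]
  rw [inv_mul_cancel₀]
  positivity

/-- Spectral facts: determinant of `1 + c • Q` and trace of `Q` via eigenvalues. -/
lemma spectral_facts {D : ℕ} {Q : Matrix (Fin D) (Fin D) ℝ} (hQ : Q.IsHermitian) (c : ℝ) :
    ((1 : Matrix (Fin D) (Fin D) ℝ) + c • Q).det = ∏ j, (1 + c * hQ.eigenvalues j) ∧
      Q.trace = ∑ j, hQ.eigenvalues j := by
  set U : Matrix (Fin D) (Fin D) ℝ := (hQ.eigenvectorUnitary : Matrix (Fin D) (Fin D) ℝ)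
  have hU : U * star U = 1 := mem_unitaryGroup_iff.mp hQ.eigenvectorUnitary.2
  have hU' : star U * U = 1 := mem_unitaryGroup_iff'.mp hQ.eigenvectorUnitary.2
  have hofReal : (RCLike.ofReal ∘ hQ.eigenvalues : Fin D → ℝ) = hQ.eigenvalues := by
    funext j; simp
  have hdiag : Matrix.diagonal (fun j => 1 + c * hQ.eigenvalues j)
      = 1 + c • Matrix.diagonal (RCLike.ofReal ∘ hQ.eigenvalues) := by
    rw [hofReal, ← Matrix.diagonal_one, ← Matrix.diagonal_smul, ← Matrix.diagonal_add]
    congr 1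
  have hkey : (1 : Matrix (Fin D) (Fin D) ℝ) + c • Q
      = U * Matrix.diagonal (fun j => 1 + c * hQ.eigenvalues j) * star U := by
    rw [hdiag, Matrix.mul_add, Matrix.add_mul, Matrix.mul_one, hU, Matrix.mul_smul,
      Matrix.smul_mul]
    congr 1
    conv_lhs => rw [hQ.spectral_theorem]
    rfl
  constructor
  · rw [hkey, Matrix.det_mul_right_comm, hU, Matrix.one_mul, Matrix.det_diagonal]
  · conv_lhs => rw [hQ.spectral_theorem]
    change (U * Matrix.diagonal _ * star U).trace = _
    rw [Matrix.trace_mul_comm, ← Matrix.mul_assoc, hU', Matrix.one_mul, Matrix.trace_diagonal,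
      hofReal]

/-- Pointwise log-det bound via eigenvalues and the tangent line of `log`. -/
lemma log_det_pointwise {D : ℕ} (Q : Matrix (Fin D) (Fin D) ℝ) (hQ : Q.PosSemidef)
    {c a : ℝ} (hc : 0 ≤ c) (ha : 1 ≤ a) :
    0 ≤ Real.log ((1 + c • Q).det) ∧
      Real.log ((1 + c • Q).det) ≤ D * Real.log a + (D + c * Q.trace - D * a) / a := by
  obtain ⟨hdet, htr⟩ := spectral_facts hQ.1 c
  have hν : ∀ j, 0 ≤ hQ.1.eigenvalues j := hQ.eigenvalues_nonneg
  have hpos : ∀ j : Fin D, (0:ℝ) < 1 + c * hQ.1.eigenvalues j := by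
    intro j; nlinarith [hν j]
  have ha0 : (0:ℝ) < a := lt_of_lt_of_le one_pos ha
  constructor
  · rw [hdet, Real.log_prod (fun j _ => (hpos j).ne')]
    apply Finset.sum_nonneg
    intro j _
    apply Real.log_nonneg
    nlinarith [hν j]
  · rw [hdet, Real.log_prod (fun j _ => (hpos j).ne')]
    have hbound : ∀ j : Fin D, Real.log (1 + c * hQ.1.eigenvalues j)
        ≤ Real.log a + (1 + c * hQ.1.eigenvalues j - a) / a := by
      intro j
      have h := Real.log_le_sub_one_of_pos (x := (1 + c * hQ.1.eigenvalues j) / a)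
        (div_pos (hpos j) ha0)
      rw [Real.log_div (hpos j).ne' ha0.ne'] at h
      have : (1 + c * hQ.1.eigenvalues j) / a - 1 = (1 + c * hQ.1.eigenvalues j - a) / a := by
        field_simp
      linarith [this ▸ h]
    calc ∑ j, Real.log (1 + c * hQ.1.eigenvalues j)
        ≤ ∑ j, (Real.log a + (1 + c * hQ.1.eigenvalues j - a) / a) :=
          Finset.sum_le_sum (fun j _ => hbound j)
      _ = D * Real.log a + (D + c * Q.trace - D * a) / a := by
          rw [Finset.sum_add_distrib, Finset.sum_const, Finset.card_univ, Fintype.card_fin]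
          simp_rw [htr, div_eq_mul_inv, ← Finset.sum_mul, nsmul_eq_mul]
          congr 1
          rw [Finset.mul_sum]
          congr 1
          rw [Finset.sum_sub_distrib, Finset.sum_add_distrib]
          simp [Finset.mul_sum, mul_comm]

/-- The main expectation bound. -/
lemma main_bound (N D : ℕ) (c : ℝ) (hc : 0 ≤ c) :
    (∫ X : Fin N → Fin D → ℝ,
        Real.log (((1 : Matrix (Fin D) (Fin D) ℝ) + c • ((Matrix.of X)ᵀ * Matrix.of X)).det)
        ∂(Measure.pi fun _ : Fin N => Measure.pi fun _ : Fin D => gaussianReal 0 1))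
      ≤ (D : ℝ) * Real.log (1 + c * N) := by
  set μ : Measure (Fin N → Fin D → ℝ) :=
    Measure.pi fun _ : Fin N => Measure.pi fun _ : Fin D => gaussianReal 0 1 with hμ
  have ha : (1:ℝ) ≤ 1 + c * N := by
    have : (0:ℝ) ≤ c * N := by positivity
    linarith
  have ha0 : (0:ℝ) < 1 + c * N := lt_of_lt_of_le one_pos ha
  -- measure-preserving coordinate evaluations
  have hmp : ∀ (i : Fin N) (j : Fin D),
      MeasurePreserving (fun X : Fin N → Fin D → ℝ => X i j) μ (gaussianReal 0 1) := by
    intro i j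
    exact (measurePreserving_eval_pi' (fun _ : Fin D => gaussianReal 0 1) j).comp
      (measurePreserving_eval_pi' (fun _ : Fin N => Measure.pi fun _ : Fin D => gaussianReal 0 1) i)
  have hsq_meas : AEStronglyMeasurable (fun x : ℝ => x ^ 2) (gaussianReal 0 1) :=
    (measurable_id.pow_const 2).aestronglyMeasurable
  have hint_coord : ∀ (i : Fin N) (j : Fin D),
      Integrable (fun X : Fin N → Fin D → ℝ => (X i j) ^ 2) μ := by
    intro i j
    exact ((hmp i j).integrable_comp hsq_meas).mpr integrable_sq_gaussian
  have hval_coord : ∀ (i : Fin N) (j : Fin D),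
      ∫ X : Fin N → Fin D → ℝ, (X i j) ^ 2 ∂μ = 1 := by
    intro i j
    have := integral_map (μ := μ) (hmp i j).measurable.aemeasurable
      (f := fun x : ℝ => x ^ 2) (by rw [(hmp i j).map_eq]; exact hsq_meas)
    rw [(hmp i j).map_eq, integral_sq_gaussian] at this
    exact this.symm
  -- trace as a sum of squares
  have htrace : ∀ X : Fin N → Fin D → ℝ,
      ((Matrix.of X)ᵀ * Matrix.of X).trace = ∑ i, ∑ j, (X i j) ^ 2 := by
    intro X
    rw [Matrix.trace]
    simp only [Matrix.diag, Matrix.mul_apply, Matrix.transpose_apply, Matrix.of_apply]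
    rw [Finset.sum_comm]
    congr 1; funext i; congr 1; funext j
    ring
  -- the dominating function
  set G : (Fin N → Fin D → ℝ) → ℝ := fun X =>
    (D : ℝ) * Real.log (1 + c * N)
      + ((D : ℝ) + c * (∑ i, ∑ j, (X i j) ^ 2) - (D : ℝ) * (1 + c * N)) / (1 + c * N) with hG
  have hPSD : ∀ X : Fin N → Fin D → ℝ, ((Matrix.of X)ᵀ * Matrix.of X).PosSemidef := by
    intro X
    have := Matrix.posSemidef_conjTranspose_mul_self (Matrix.of X)
    rwa [Matrix.conjTranspose_eq_transpose_of_trivial] at this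
  have hF_nonneg : ∀ X : Fin N → Fin D → ℝ,
      0 ≤ Real.log (((1 : Matrix (Fin D) (Fin D) ℝ) + c • ((Matrix.of X)ᵀ * Matrix.of X)).det) :=
    fun X => (log_det_pointwise _ (hPSD X) hc ha).1
  have hFG : ∀ X : Fin N → Fin D → ℝ,
      Real.log (((1 : Matrix (Fin D) (Fin D) ℝ) + c • ((Matrix.of X)ᵀ * Matrix.of X)).det)
        ≤ G X := by
    intro X
    have h := (log_det_pointwise _ (hPSD X) hc ha).2
    rw [htrace X] at h
    exact h
  -- integrability of G
  have hint_sum : Integrable (fun X : Fin N → Fin D → ℝ => ∑ i, ∑ j, (X i j) ^ 2) μ := by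
    apply integrable_finset_sum
    intro i _
    apply integrable_finset_sum
    intro j _
    exact hint_coord i j
  have hint_G : Integrable G μ := by
    rw [hG]
    apply Integrable.add (integrable_const _)
    simp_rw [sub_div, add_div, mul_div_assoc]
    apply Integrable.sub
    apply Integrable.add (integrable_const _)
    · exact (hint_sum.div_const _).const_mul c
    · exact integrable_const _
  -- integral of G
  have hsum_val : ∫ X, (∑ i, ∑ j, (X i j) ^ 2) ∂μ = (N : ℝ) * D := by
    rw [integral_finset_sum _ (fun i _ => integrable_finset_sum _ (fun j _ => hint_coord i j))]
    have : ∀ i : Fin N, ∫ X, (∑ j, (X i j) ^ 2) ∂μ = (D : ℝ) := by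
      intro i
      rw [integral_finset_sum _ (fun j _ => hint_coord i j)]
      simp [hval_coord i]
    simp [this]
  have hG_val : ∫ X, G X ∂μ = (D : ℝ) * Real.log (1 + c * N) := by
    have e1 : ∀ X : Fin N → Fin D → ℝ,
        G X = (c / (1 + c * N)) * (∑ i, ∑ j, (X i j) ^ 2)
            + ((D : ℝ) * Real.log (1 + c * N) + ((D : ℝ) - (D : ℝ) * (1 + c * N)) / (1 + c * N)) := by
      intro X
      rw [hG]
      field_simp
      ring
    rw [integral_congr_ae (Filter.Eventually.of_forall e1)]
    rw [integral_add (hint_sum.const_mul _) (integrable_const _), integral_const_mul, hsum_val,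
      integral_const]
    simp only [measure_univ, ENNReal.toReal_one, probReal_univ, one_smul, smul_eq_mul]
    field_simp
    ring
  calc ∫ X, Real.log (((1 : Matrix (Fin D) (Fin D) ℝ)
          + c • ((Matrix.of X)ᵀ * Matrix.of X)).det) ∂μ
      ≤ ∫ X, G X ∂μ := integral_mono_of_nonneg (Filter.Eventually.of_forall hF_nonneg) hint_G
        (Filter.Eventually.of_forall hFG)
    _ = (D : ℝ) * Real.log (1 + c * N) := hG_val

end aux

/-- Channel-capacity upper bound (feature form): for i.i.d. standard Gaussian
entries, `E[log det (I_D + c Xᵀ X)] ≤ D log (1 + c N)` for `c ≥ 0`; in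
particular with `c = s/D` the channel capacity
`C = (1/2) E[log det (I_D + (s/D) Xᵀ X)]` satisfies `C ≤ (D/2) log ((N/D) s + 1)`. -/
theorem stmt_3 (N D : ℕ) (c : ℝ) (hc : 0 ≤ c) :
    (∫ X : Fin N → Fin D → ℝ,
        Real.log (((1 : Matrix (Fin D) (Fin D) ℝ) + c • ((Matrix.of X)ᵀ * Matrix.of X)).det)
        ∂(Measure.pi fun _ : Fin N => Measure.pi fun _ : Fin D => gaussianReal 0 1)
      ≤ (D : ℝ) * Real.log (1 + c * N)) ∧
    (∀ s : ℝ, 0 ≤ s →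
      (1 / 2 : ℝ) * ∫ X : Fin N → Fin D → ℝ,
          Real.log (((1 : Matrix (Fin D) (Fin D) ℝ)
              + (s / D) • ((Matrix.of X)ᵀ * Matrix.of X)).det)
          ∂(Measure.pi fun _ : Fin N => Measure.pi fun _ : Fin D => gaussianReal 0 1)
        ≤ (D / 2 : ℝ) * Real.log ((N / D : ℝ) * s + 1)) := by
  constructor
  · exact main_bound N D c hc
  · intro s hs
    have h := main_bound N D (s / D) (div_nonneg hs (Nat.cast_nonneg D))
    have harg : (1 : ℝ) + s / D * N = (N / D : ℝ) * s + 1 := by ring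
    rw [harg] at h
    linarith
end

section
/- Let μ be the law of an N×D random matrix X whose entries are i.i.d. standard Gaussian N(0,1), and let c ≥ 0. Then ∫ log det(I_N + c·X(ω)·X(ω)ᵀ) dμ(ω) ≤ N · log(1 + c·D). In particular, for signal-to-noise ratio s ≥ 0 and c = s/D, the channel capacity C = (1/2)∫ log det(I_N + (s/D)·XXᵀ) dμ satisfies C ≤ (N/2)·log(s + 1); that is, in the over-parameterized regime D > N the channel capacity upper bound is independent of D (it saturates). -/
open Matrix Real MeasureTheory ProbabilityTheory
open scoped ENNReal NNReal

/-! ### Auxiliary matrix lemmas -/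

lemma aux_posSemidef_smul {n : ℕ} {M : Matrix (Fin n) (Fin n) ℝ} (hM : M.PosSemidef) {c : ℝ}
    (hc : 0 ≤ c) : (c • M).PosSemidef := by
  constructor
  · show (c • M)ᴴ = c • M
    rw [Matrix.conjTranspose_smul, hM.1.eq]
    simp
  · intro x
    exact (hM.smul hc).2 x

lemma aux_posSemidef_cXXt {N : ℕ} (D : ℕ) (c : ℝ) (hc : 0 ≤ c) (X : Fin N → Fin D → ℝ) :
    (c • (Matrix.of X * (Matrix.of X)ᵀ)).PosSemidef := by
  have h : (Matrix.of X * (Matrix.of X)ᵀ).PosSemidef := by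
    have := Matrix.posSemidef_self_mul_conjTranspose (Matrix.of X)
    simpa using this
  exact aux_posSemidef_smul h hc

lemma aux_trace_cXXt {N : ℕ} (D : ℕ) (c : ℝ) (X : Fin N → Fin D → ℝ) :
    (c • (Matrix.of X * (Matrix.of X)ᵀ)).trace = c * ∑ i, ∑ j, (X i j) ^ 2 := by
  rw [Matrix.trace_smul, smul_eq_mul]
  congr 1
  simp [Matrix.trace, Matrix.diag, Matrix.mul_apply, sq]

lemma aux_one_add_decomp {N : ℕ} {B : Matrix (Fin N) (Fin N) ℝ} (hB : B.IsHermitian) :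
    (1 : Matrix (Fin N) (Fin N) ℝ) + B =
      (hB.eigenvectorUnitary : Matrix (Fin N) (Fin N) ℝ) *
        Matrix.diagonal (fun i => 1 + hB.eigenvalues i) *
        (star hB.eigenvectorUnitary : Matrix (Fin N) (Fin N) ℝ) := by
  have h1 : (hB.eigenvectorUnitary : Matrix (Fin N) (Fin N) ℝ) *
      (star hB.eigenvectorUnitary : Matrix (Fin N) (Fin N) ℝ) = 1 :=
    Matrix.mem_unitaryGroup_iff.mp hB.eigenvectorUnitary.2
  have hdiag : Matrix.diagonal (fun i : Fin N => 1 + hB.eigenvalues i)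
      = 1 + Matrix.diagonal (RCLike.ofReal ∘ hB.eigenvalues) := by
    rw [← Matrix.diagonal_one, Matrix.diagonal_add]
    rfl
  rw [hdiag, Matrix.mul_add, Matrix.add_mul, Matrix.mul_one, h1, ← Unitary.conjStarAlgAut_apply (S := ℝ), ← hB.spectral_theorem]

lemma aux_det_one_add {N : ℕ} {B : Matrix (Fin N) (Fin N) ℝ} (hB : B.IsHermitian) :
    ((1 : Matrix (Fin N) (Fin N) ℝ) + B).det = ∏ i, (1 + hB.eigenvalues i) := by
  rw [aux_one_add_decomp hB, Matrix.det_mul_right_comm,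
    Matrix.mem_unitaryGroup_iff.mp hB.eigenvectorUnitary.2, one_mul, Matrix.det_diagonal]

lemma aux_trace_eq_sum {N : ℕ} {B : Matrix (Fin N) (Fin N) ℝ} (hB : B.IsHermitian) :
    B.trace = ∑ i, hB.eigenvalues i := by
  conv_lhs => rw [hB.spectral_theorem]
  rw [Unitary.conjStarAlgAut_apply, Matrix.trace_mul_cycle,
    Matrix.mem_unitaryGroup_iff'.mp hB.eigenvectorUnitary.2, one_mul, Matrix.trace_diagonal]
  rfl

lemma aux_logdet_nonneg {N : ℕ} {B : Matrix (Fin N) (Fin N) ℝ} (hB : B.PosSemidef) :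
    0 ≤ Real.log ((1 : Matrix (Fin N) (Fin N) ℝ) + B).det := by
  refine Real.log_nonneg ?_
  rw [aux_det_one_add hB.1]
  calc (1:ℝ) = ∏ _i : Fin N, (1:ℝ) := by simp
    _ ≤ ∏ i, (1 + hB.1.eigenvalues i) :=
        Finset.prod_le_prod (fun i _ => zero_le_one)
          (fun i _ => by linarith [hB.eigenvalues_nonneg i])

lemma aux_logdet_le {N : ℕ} {B : Matrix (Fin N) (Fin N) ℝ} (hB : B.PosSemidef) {t : ℝ}
    (ht : 0 < t) :
    Real.log ((1 : Matrix (Fin N) (Fin N) ℝ) + B).det ≤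
      N * Real.log t + (((N : ℝ) + B.trace) / t - N) := by
  have hd : ∀ i, 0 ≤ hB.1.eigenvalues i := hB.eigenvalues_nonneg
  rw [aux_det_one_add hB.1, Real.log_prod (fun i _ => by nlinarith [hd i]),
    aux_trace_eq_sum hB.1]
  have key : ∀ i : Fin N, Real.log (1 + hB.1.eigenvalues i)
      ≤ Real.log t + ((1 + hB.1.eigenvalues i) / t - 1) := by
    intro i
    have hpos : (0:ℝ) < (1 + hB.1.eigenvalues i) / t := by
      have := hd i; positivity
    have h := Real.log_le_sub_one_of_pos hpos
    rw [Real.log_div (by nlinarith [hd i]) (ne_of_gt ht)] at h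
    linarith
  calc ∑ i, Real.log (1 + hB.1.eigenvalues i)
      ≤ ∑ i : Fin N, (Real.log t + ((1 + hB.1.eigenvalues i) / t - 1)) :=
        Finset.sum_le_sum fun i _ => key i
    _ = N * Real.log t + (((N : ℝ) + ∑ i, hB.1.eigenvalues i) / t - N) := by
        rw [Finset.sum_add_distrib, Finset.sum_const, Finset.card_univ, Fintype.card_fin,
          Finset.sum_sub_distrib, Finset.sum_const, Finset.card_univ, Fintype.card_fin,
          ← Finset.sum_div, Finset.sum_add_distrib, Finset.sum_const, Finset.card_univ,
          Fintype.card_fin]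
        simp [nsmul_eq_mul]

/-! ### Auxiliary probabilistic lemmas -/

lemma aux_measurePreserving_eval {ι : Type*} [Fintype ι] [DecidableEq ι] {α : ι → Type*}
    [∀ i, MeasurableSpace (α i)] (μ : ∀ i, Measure (α i)) [∀ i, IsProbabilityMeasure (μ i)]
    (i : ι) : MeasurePreserving (Function.eval i) (Measure.pi μ) (μ i) := by
  refine ⟨measurable_pi_apply i, ?_⟩
  ext s hs
  rw [Measure.map_apply (measurable_pi_apply i) hs, Set.eval_preimage, Measure.pi_pi]
  rw [Finset.prod_eq_single i (fun j _ hji => by simp [Function.update_of_ne hji]) (by simp)]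
  simp

lemma aux_rpow_two (x : ℝ) : x ^ (2:ℝ) = x ^ 2 := by
  rw [show (2:ℝ)=((2:ℕ):ℝ) by norm_num, Real.rpow_natCast]

lemma aux_gauss_wd : gaussianReal 0 1 =
    MeasureTheory.volume.withDensity fun x => ((gaussianPDFReal 0 1 x).toNNReal : ℝ≥0∞) := by
  rw [gaussianReal_of_var_ne_zero 0 one_ne_zero]
  rfl

lemma aux_pdf_eq (x : ℝ) :
    gaussianPDFReal 0 1 x = (Real.sqrt (2 * π))⁻¹ * Real.exp (-(1/2) * x^2) := by
  simp only [gaussianPDFReal, NNReal.coe_one, mul_one, sub_zero]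
  ring_nf

lemma aux_integrable_sq_gaussian : Integrable (fun x : ℝ => x^2) (gaussianReal 0 1) := by
  rw [aux_gauss_wd, integrable_withDensity_iff_integrable_coe_smul
    ((measurable_gaussianPDFReal 0 1).real_toNNReal)]
  have h : Integrable (fun x : ℝ => (Real.sqrt (2 * π))⁻¹ * (x^2 * Real.exp (-(1/2) * x^2))) := by
    have h := integrable_rpow_mul_exp_neg_mul_sq (b := 1/2) (by norm_num) (s := 2) (by norm_num)
    refine Integrable.const_mul ?_ _
    simpa [aux_rpow_two] using h
  refine h.congr (Filter.Eventually.of_forall fun x => ?_)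
  show _ = (gaussianPDFReal 0 1 x).toNNReal • x ^ 2
  rw [NNReal.smul_def, smul_eq_mul, Real.coe_toNNReal _ (gaussianPDFReal_nonneg 0 1 x),
    aux_pdf_eq]
  ring

lemma aux_integral_sq_exp : ∫ x : ℝ, x^2 * Real.exp (-(1/2) * x^2) = Real.sqrt (2 * π) := by
  have heven : ∀ x : ℝ, (|x|)^2 * Real.exp (-(1/2) * |x|^2) = x^2 * Real.exp (-(1/2) * x^2) := by
    intro x; rw [sq_abs]
  calc ∫ x : ℝ, x^2 * Real.exp (-(1/2) * x^2)
      = ∫ x : ℝ, (|x|)^2 * Real.exp (-(1/2) * |x|^2) := by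
        exact (integral_congr_ae (Filter.Eventually.of_forall fun x => (heven x).symm))
    _ = 2 * ∫ x in Set.Ioi (0:ℝ), x^2 * Real.exp (-(1/2) * x^2) :=
        integral_comp_abs (f := fun x => x^2 * Real.exp (-(1/2) * x^2))
    _ = Real.sqrt (2 * π) := by
        have h2 : ∫ x in Set.Ioi (0:ℝ), x^2 * Real.exp (-(1/2) * x^2)
            = (1/2:ℝ) ^ (-((2:ℝ)+1)/2) * (1/2) * Real.Gamma (((2:ℝ)+1)/2) := by
          rw [← integral_rpow_mul_exp_neg_mul_rpow (p := 2) (q := 2) (b := 1/2)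
            (by norm_num) (by norm_num) (by norm_num)]
          exact setIntegral_congr_fun measurableSet_Ioi (fun x _ => by rw [aux_rpow_two])
        rw [h2]
        have hG : Real.Gamma (((2:ℝ)+1)/2) = (1/2) * Real.sqrt π := by
          rw [show ((2:ℝ)+1)/2 = 1/2 + 1 by norm_num, Real.Gamma_add_one (by norm_num),
            Real.Gamma_one_half_eq]
        have hb : (1/2:ℝ) ^ (-((2:ℝ)+1)/2) = 2 * Real.sqrt 2 := by
          rw [one_div, Real.inv_rpow (by norm_num), ← Real.rpow_neg (by norm_num)]
          rw [show -(-((2:ℝ)+1)/2) = 1 + 1/2 by norm_num, Real.rpow_add (by norm_num),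
            Real.rpow_one, ← Real.sqrt_eq_rpow]
        rw [hG, hb, Real.sqrt_mul (by norm_num)]
        ring

lemma aux_integral_sq_gaussian : ∫ x, x^2 ∂(gaussianReal 0 1) = 1 := by
  have h : ∫ x, x^2 ∂(gaussianReal 0 1) = ∫ x : ℝ, gaussianPDFReal 0 1 x * x^2 := by
    rw [aux_gauss_wd, integral_withDensity_eq_integral_smul
      ((measurable_gaussianPDFReal 0 1).real_toNNReal)]
    refine integral_congr_ae (Filter.Eventually.of_forall fun x => ?_)
    show (gaussianPDFReal 0 1 x).toNNReal • x ^ 2 = _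
    rw [NNReal.smul_def, smul_eq_mul, Real.coe_toNNReal _ (gaussianPDFReal_nonneg 0 1 x)]
  rw [h]
  have h2 : ∀ x : ℝ, gaussianPDFReal 0 1 x * x^2
      = (Real.sqrt (2 * π))⁻¹ * (x^2 * Real.exp (-(1/2) * x^2)) := by
    intro x; rw [aux_pdf_eq]; ring
  rw [integral_congr_ae (Filter.Eventually.of_forall h2), integral_const_mul,
    aux_integral_sq_exp]
  have : Real.sqrt (2 * π) ≠ 0 := by positivity
  field_simp

/-! ### Key bound -/

lemma aux_key (N D : ℕ) (c : ℝ) (hc : 0 ≤ c) :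
    (∫ X : Fin N → Fin D → ℝ,
        Real.log (((1 : Matrix (Fin N) (Fin N) ℝ) + c • (Matrix.of X * (Matrix.of X)ᵀ)).det)
        ∂(Measure.pi fun _ : Fin N => Measure.pi fun _ : Fin D => gaussianReal 0 1))
      ≤ (N : ℝ) * Real.log (1 + c * D) := by
  set μ := (Measure.pi fun _ : Fin N => Measure.pi fun _ : Fin D => gaussianReal 0 1) with hμ
  set t : ℝ := 1 + c * D with htdef
  have ht : 0 < t := by positivity
  have hmp : ∀ (i : Fin N) (j : Fin D),
      MeasurePreserving (fun X : Fin N → Fin D → ℝ => X i j) μ (gaussianReal 0 1) := by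
    intro i j
    exact (aux_measurePreserving_eval (fun _ : Fin D => gaussianReal 0 1) j).comp
      (aux_measurePreserving_eval (fun _ : Fin N => Measure.pi fun _ : Fin D => gaussianReal 0 1) i)
  have hint : ∀ (i : Fin N) (j : Fin D),
      Integrable (fun X : Fin N → Fin D → ℝ => (X i j)^2) μ := by
    intro i j
    have hi : Integrable (fun x : ℝ => x^2) (μ.map (fun X : Fin N → Fin D → ℝ => X i j)) := by
      rw [(hmp i j).map_eq]; exact aux_integrable_sq_gaussian
    exact (integrable_map_measure
      ((by fun_prop : Measurable fun x : ℝ => x^2).aestronglyMeasurable)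
      (hmp i j).measurable.aemeasurable).mp hi
  have hval : ∀ (i : Fin N) (j : Fin D), ∫ X, (X i j)^2 ∂μ = 1 := by
    intro i j
    rw [← aux_integral_sq_gaussian, ← (hmp i j).map_eq,
      integral_map (hmp i j).measurable.aemeasurable
        ((by fun_prop : Measurable fun x : ℝ => x^2).aestronglyMeasurable)]
  have hGint : Integrable (fun X : Fin N → Fin D → ℝ => ∑ i, ∑ j, (X i j)^2) μ :=
    integrable_finset_sum _ fun i _ => integrable_finset_sum _ fun j _ => hint i j
  have hGval : ∫ X, (∑ i, ∑ j, (X i j)^2) ∂μ = (N : ℝ) * D := by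
    calc ∫ X, (∑ i, ∑ j, (X i j)^2) ∂μ = ∑ i : Fin N, ∫ X, (∑ j, (X i j)^2) ∂μ :=
          integral_finset_sum _ fun i _ => integrable_finset_sum _ fun j _ => hint i j
      _ = ∑ _i : Fin N, ∑ _j : Fin D, (1:ℝ) := by
          refine Finset.sum_congr rfl fun i _ => ?_
          rw [integral_finset_sum _ fun j _ => hint i j]
          exact Finset.sum_congr rfl fun j _ => hval i j
      _ = (N : ℝ) * D := by simp [mul_comm]
  have hg : Integrable
      (fun X : Fin N → Fin D → ℝ =>
        ((N:ℝ) * Real.log t + (N:ℝ) / t - N) + (c/t) * (∑ i, ∑ j, (X i j)^2)) μ :=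
    (integrable_const _).add (hGint.const_mul (c/t))
  have hgval : ∫ X, (((N:ℝ) * Real.log t + (N:ℝ) / t - N) + (c/t) * (∑ i, ∑ j, (X i j)^2)) ∂μ
      = (N:ℝ) * Real.log t := by
    rw [integral_add (integrable_const _) (hGint.const_mul (c/t)), integral_const,
      integral_const_mul, hGval]
    simp only [measure_univ, probReal_univ, ENNReal.toReal_one, smul_eq_mul, one_mul]
    field_simp
    ring
  have hpt : ∀ X : Fin N → Fin D → ℝ,
      Real.log (((1 : Matrix (Fin N) (Fin N) ℝ) + c • (Matrix.of X * (Matrix.of X)ᵀ)).det)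
        ≤ ((N:ℝ) * Real.log t + (N:ℝ) / t - N) + (c/t) * (∑ i, ∑ j, (X i j)^2) := by
    intro X
    have h1 := aux_logdet_le (aux_posSemidef_cXXt D c hc X) ht
    rw [aux_trace_cXXt] at h1
    refine h1.trans_eq ?_
    field_simp
    ring
  have hmain := integral_mono_of_nonneg
    (Filter.Eventually.of_forall fun X => aux_logdet_nonneg (aux_posSemidef_cXXt D c hc X))
    hg (Filter.Eventually.of_forall hpt)
  rw [hgval] at hmain
  exact hmain

/-- Channel-capacity upper bound (sample form / saturation): for i.i.d.
standard Gaussian entries, `E[log det (I_N + c X Xᵀ)] ≤ N log (1 + c D)` for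
`c ≥ 0`; in particular with `c = s/D` the channel capacity
`C = (1/2) E[log det (I_N + (s/D) X Xᵀ)]` satisfies `C ≤ (N/2) log (s + 1)`,
a bound independent of `D`. -/
theorem stmt_4 (N D : ℕ) (c : ℝ) (hc : 0 ≤ c) :
    (∫ X : Fin N → Fin D → ℝ,
        Real.log (((1 : Matrix (Fin N) (Fin N) ℝ) + c • (Matrix.of X * (Matrix.of X)ᵀ)).det)
        ∂(Measure.pi fun _ : Fin N => Measure.pi fun _ : Fin D => gaussianReal 0 1)
      ≤ (N : ℝ) * Real.log (1 + c * D)) ∧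
    (∀ s : ℝ, 0 ≤ s →
      (1 / 2 : ℝ) * ∫ X : Fin N → Fin D → ℝ,
          Real.log (((1 : Matrix (Fin N) (Fin N) ℝ)
              + (s / D) • (Matrix.of X * (Matrix.of X)ᵀ)).det)
          ∂(Measure.pi fun _ : Fin N => Measure.pi fun _ : Fin D => gaussianReal 0 1)
        ≤ (N / 2 : ℝ) * Real.log (s + 1)) := by
  refine ⟨aux_key N D c hc, fun s hs => ?_⟩
  have h := aux_key N D (s/D) (div_nonneg hs (Nat.cast_nonneg D))
  have hlog : (N:ℝ) * Real.log (1 + s/(D:ℝ) * D) ≤ (N:ℝ) * Real.log (s+1) := by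
    rcases Nat.eq_zero_or_pos D with hD | hD
    · subst hD
      simp only [Nat.cast_zero, mul_zero, add_zero, Real.log_one]
      exact mul_nonneg (Nat.cast_nonneg N) (Real.log_nonneg (by linarith))
    · rw [div_mul_cancel₀ s (Nat.cast_ne_zero.mpr hD.ne'), add_comm]
  linarith
end
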